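/- Let C_i ⊆ H, i ∈ I := {1,…,M}, be closed and convex sets in a real Hilbert space H with C := ⋂_{i∈I} C_i ≠ ∅. Let T_k := Σ_{n=1}^{N_k} ω_n^k ∏_{j∈J_n^k} P_{C_j}, where each J_n^k ⊆ I is a string, ω_n^k ∈ (0,1) with Σ_n ω_n^k = 1 and ω_n^k ≥ ω > 0, m := sup_k max_n |J_n^k| < ∞, and there is s ≥ 1 such that I = I_k ∪ … ∪ I_{k+s−1} for all k, where I_k := J_1^k ∪ … ∪ J_{N_k}^k. Let {e_k} ⊆ [0,∞) be summable and let {x^k} ⊆ H satisfy ‖x^{k+1} − T_k x^k‖ ≤ e_k for all k. If the family {C_i : i ∈ I} is boundedly linearly regular, then there are κ > 0, c > 0, q ∈ (0,1) and x^∞ ∈ C such that for all integers k ≥ i ≥ 0: (1/(2κ)) ‖x^{k+1} − x^∞‖ − 2 Σ_{j=i}^{∞} e_j ≤ max_{j∈I} d(x^{k+1}, C_j) ≤ c q^{k−i} + 2 Σ_{j=i}^{∞} e_j. -/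

import Mathlib

open Metric Filter Topology

/-- `P` is the metric projection onto `C`. -/
def IsMetricProj {H : Type*} [NormedAddCommGroup H] (C : Set H) (P : H → H) : Prop :=
  ∀ x : H, P x ∈ C ∧ ∀ z ∈ C, ‖x - P x‖ ≤ ‖x - z‖

/-- For a string `J = (j_1, …, j_l)`, `stringProd P J = P j_l ∘ ⋯ ∘ P j_1`. -/
def stringProd {H : Type*} {M : ℕ} (P : Fin M → H → H) : List (Fin M) → H → H
  | [] => id
  | j :: J => fun x => stringProd P J (P j x)

section Aux

variable {H : Type*} [NormedAddCommGroup H] [InnerProductSpace ℝ H]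

lemma proj_inner_le {C : Set H} (hcv : Convex ℝ C) {P : H → H} (hP : IsMetricProj C P)
    (u : H) {z : H} (hz : z ∈ C) : (inner ℝ (u - P u) (z - P u) : ℝ) ≤ 0 := by
  have h1 : ‖u - P u‖ = ⨅ w : C, ‖u - (w : H)‖ := by
    have : Nonempty C := ⟨⟨P u, (hP u).1⟩⟩
    apply le_antisymm
    · exact le_ciInf fun w => (hP u).2 w w.2
    · have hbdd : BddBelow (Set.range fun w : C => ‖u - (w : H)‖) := by
        refine ⟨0, ?_⟩
        rintro b ⟨w, rfl⟩
        exact norm_nonneg _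
      exact ciInf_le hbdd ⟨P u, (hP u).1⟩
  exact (norm_eq_iInf_iff_real_inner_le_zero hcv (hP u).1).mp h1 z hz

lemma proj_firm {C : Set H} (hcv : Convex ℝ C) {P : H → H} (hP : IsMetricProj C P)
    (u : H) {z : H} (hz : z ∈ C) : ‖P u - z‖ ^ 2 + ‖u - P u‖ ^ 2 ≤ ‖u - z‖ ^ 2 := by
  have key : (0 : ℝ) ≤ inner ℝ (u - P u) (P u - z) := by
    have h := proj_inner_le hcv hP u hz
    have : (inner ℝ (u - P u) (z - P u) : ℝ) = - inner ℝ (u - P u) (P u - z) := by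
      rw [show z - P u = -(P u - z) by abel, inner_neg_right]
    linarith [this ▸ h]
  have hexp : ‖u - z‖ ^ 2 = ‖u - P u‖ ^ 2 + 2 * (inner ℝ (u - P u) (P u - z) : ℝ)
      + ‖P u - z‖ ^ 2 := by
    rw [show u - z = (u - P u) + (P u - z) by abel, norm_add_sq_real]
  linarith

lemma proj_fixes {C : Set H} {P : H → H} (hP : IsMetricProj C P) {z : H} (hz : z ∈ C) :
    P z = z := by
  have := (hP z).2 z hz
  simp only [sub_self, norm_zero] at this
  have := norm_le_zero_iff.mp this
  rw [sub_eq_zero] at this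
  exact this.symm

lemma proj_nonexp {C : Set H} (hcv : Convex ℝ C) {P : H → H} (hP : IsMetricProj C P)
    (u v : H) : ‖P u - P v‖ ≤ ‖u - v‖ := by
  have h1 := proj_inner_le hcv hP u (hP v).1
  have h2 := proj_inner_le hcv hP v (hP u).1
  have hkey : ‖P u - P v‖ ^ 2 ≤ (inner ℝ (u - v) (P u - P v) : ℝ) := by
    have e1 : (inner ℝ (u - P u) (P v - P u) : ℝ) = - inner ℝ (u - P u) (P u - P v) := by
      rw [show P v - P u = -(P u - P v) by abel, inner_neg_right]
    have e2 : (inner ℝ (u - v) (P u - P v) : ℝ) = inner ℝ (u - P u) (P u - P v)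
        - inner ℝ (v - P v) (P u - P v) + inner ℝ (P u - P v) (P u - P v) := by
      rw [show u - v = (u - P u) - (v - P v) + (P u - P v) by abel, inner_add_left,
        inner_sub_left]
    rw [e2, real_inner_self_eq_norm_sq]
    rw [e1] at h1
    linarith
  have hcs := real_inner_le_norm (u - v) (P u - P v)
  rcases eq_or_lt_of_le (norm_nonneg (P u - P v)) with h | h
  · rw [← h]; exact norm_nonneg _
  · nlinarith


variable {M : ℕ} {Cset : Fin M → Set H} {P : Fin M → H → H}

lemma stringProd_append (P : Fin M → H → H) (A B : List (Fin M)) (u : H) :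
    stringProd P (A ++ B) u = stringProd P B (stringProd P A u) := by
  induction A generalizing u with
  | nil => simp [stringProd]
  | cons j A ih => simp [stringProd, ih]

lemma stringProd_nonexp (hcv : ∀ i, Convex ℝ (Cset i))
    (hP : ∀ i, IsMetricProj (Cset i) (P i)) (Jl : List (Fin M)) :
    ∀ u v : H, ‖stringProd P Jl u - stringProd P Jl v‖ ≤ ‖u - v‖ := by
  induction Jl with
  | nil => intro u v; simp [stringProd]
  | cons j Jl ih =>
    intro u v
    exact le_trans (ih (P j u) (P j v)) (proj_nonexp (hcv j) (hP j) u v)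

lemma stringProd_fixes (hP : ∀ i, IsMetricProj (Cset i) (P i)) (Jl : List (Fin M))
    {z : H} (hz : z ∈ ⋂ i, Cset i) : stringProd P Jl z = z := by
  induction Jl with
  | nil => rfl
  | cons j Jl ih =>
    show stringProd P Jl (P j z) = z
    rw [proj_fixes (hP j) (Set.mem_iInter.mp hz j), ih]

lemma stringProd_quasi (hcv : ∀ i, Convex ℝ (Cset i))
    (hP : ∀ i, IsMetricProj (Cset i) (P i)) (Jl : List (Fin M))
    (u : H) {z : H} (hz : z ∈ ⋂ i, Cset i) :
    ‖stringProd P Jl u - z‖ ≤ ‖u - z‖ := by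
  have := stringProd_nonexp hcv hP Jl u z
  rwa [stringProd_fixes hP Jl hz] at this

lemma stringProd_move (hcv : ∀ i, Convex ℝ (Cset i))
    (hP : ∀ i, IsMetricProj (Cset i) (P i)) (Jl : List (Fin M)) :
    ∀ (u : H) {z : H}, z ∈ (⋂ i, Cset i) →
      ‖u - stringProd P Jl u‖ ^ 2
        ≤ 2 ^ Jl.length * (‖u - z‖ ^ 2 - ‖stringProd P Jl u - z‖ ^ 2) := by
  induction Jl with
  | nil => intro u z hz; simp [stringProd]
  | cons j Jl ih =>
    intro u z hz
    have hzj : z ∈ Cset j := Set.mem_iInter.mp hz j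
    set v := P j u with hv
    have hQ : stringProd P (j :: Jl) u = stringProd P Jl v := rfl
    have hA : ‖v - z‖ ^ 2 + ‖u - v‖ ^ 2 ≤ ‖u - z‖ ^ 2 := proj_firm (hcv j) (hP j) u hzj
    have hIH := ih v hz
    have hq : ‖stringProd P Jl v - z‖ ≤ ‖v - z‖ := stringProd_quasi hcv hP Jl v hz
    have hqsq : ‖stringProd P Jl v - z‖ ^ 2 ≤ ‖v - z‖ ^ 2 := by
      have := norm_nonneg (stringProd P Jl v - z); nlinarith
    have htri : ‖u - stringProd P Jl v‖ ≤ ‖u - v‖ + ‖v - stringProd P Jl v‖ := by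
      have : u - stringProd P Jl v = (u - v) + (v - stringProd P Jl v) := by abel
      rw [this]; exact norm_add_le _ _
    have h2 : (1 : ℝ) ≤ 2 ^ Jl.length := one_le_pow₀ (by norm_num)
    have hn1 := norm_nonneg (u - stringProd P Jl v)
    have hn2 := norm_nonneg (u - v)
    have hn3 := norm_nonneg (v - stringProd P Jl v)
    have hX2 : ‖u - stringProd P Jl v‖ ^ 2
        ≤ 2 * ‖u - v‖ ^ 2 + 2 * ‖v - stringProd P Jl v‖ ^ 2 := by
      have hmm := mul_self_le_mul_self hn1 htri
      nlinarith [sq_nonneg (‖u - v‖ - ‖v - stringProd P Jl v‖)]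
    have hApos : (0:ℝ) ≤ ‖u - z‖ ^ 2 - ‖v - z‖ ^ 2 := by nlinarith [sq_nonneg (‖u - v‖)]
    have hpow : (2:ℝ) ^ (j :: Jl).length = 2 ^ Jl.length * 2 := by
      rw [List.length_cons, pow_succ]
    rw [hQ, hpow]
    nlinarith [mul_nonneg (by linarith : (0:ℝ) ≤ (2:ℝ) ^ Jl.length - 1) hApos]

lemma stringProd_mem_est (hcv : ∀ i, Convex ℝ (Cset i))
    (hP : ∀ i, IsMetricProj (Cset i) (P i)) (Jl : List (Fin M))
    (u : H) {z : H} (hz : z ∈ (⋂ i, Cset i)) {j : Fin M} (hj : j ∈ Jl) :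
    infDist u (Cset j) ^ 2
      ≤ 2 ^ Jl.length * (‖u - z‖ ^ 2 - ‖stringProd P Jl u - z‖ ^ 2) := by
  obtain ⟨A, B, rfl⟩ := List.append_of_mem hj
  set u1 := stringProd P (A ++ [j]) u with hu1
  have hu1mem : u1 ∈ Cset j := by
    rw [hu1, stringProd_append]
    exact (hP j _).1
  have hinf : infDist u (Cset j) ≤ ‖u - u1‖ := by
    have := infDist_le_dist_of_mem (x := u) hu1mem
    rwa [dist_eq_norm] at this
  have hmove := stringProd_move hcv hP (A ++ [j]) u hz
  have hrest : ‖stringProd P (A ++ (j :: B)) u - z‖ ≤ ‖u1 - z‖ := by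
    rw [List.append_cons, stringProd_append]
    exact stringProd_quasi hcv hP B u1 hz
  have hlen : (2 : ℝ) ^ (A ++ [j]).length ≤ 2 ^ (A ++ (j :: B)).length := by
    apply pow_le_pow_right₀ (by norm_num)
    simp
  have hd1 : ‖u1 - z‖ ≤ ‖u - z‖ := stringProd_quasi hcv hP (A ++ [j]) u hz
  have h1 := norm_nonneg (u1 - z)
  have h2 := norm_nonneg (stringProd P (A ++ (j :: B)) u - z)
  have h3 := norm_nonneg (u - z)
  have hinf0 : (0:ℝ) ≤ infDist u (Cset j) := infDist_nonneg
  have step1 : infDist u (Cset j) ^ 2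
      ≤ 2 ^ (A ++ [j]).length * (‖u - z‖ ^ 2 - ‖u1 - z‖ ^ 2) := by
    have hmm := mul_self_le_mul_self hinf0 hinf
    nlinarith [hmove]
  have hq2 : ‖stringProd P (A ++ (j :: B)) u - z‖ ^ 2 ≤ ‖u1 - z‖ ^ 2 := by nlinarith
  have hApos : (0:ℝ) ≤ ‖u - z‖ ^ 2 - ‖u1 - z‖ ^ 2 := by nlinarith
  refine le_trans step1 (mul_le_mul hlen (by linarith) hApos (by positivity))


lemma avg_center {n : ℕ} (w : Fin n → ℝ) (hws : ∑ i, w i = 1) (a : Fin n → H) (z : H) :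
    (∑ i, w i • a i) - z = ∑ i, w i • (a i - z) := by
  simp only [smul_sub, Finset.sum_sub_distrib]
  rw [← Finset.sum_smul, hws, one_smul]

lemma avg_dist_le {n : ℕ} (w : Fin n → ℝ) (hw : ∀ i, 0 ≤ w i) (hws : ∑ i, w i = 1)
    (a b : Fin n → H) (d : ℝ) (h : ∀ i, ‖a i - b i‖ ≤ d) :
    ‖(∑ i, w i • a i) - (∑ i, w i • b i)‖ ≤ d := by
  have key : (∑ i, w i • a i) - (∑ i, w i • b i) = ∑ i, w i • (a i - b i) := by
    simp only [smul_sub, Finset.sum_sub_distrib]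
  rw [key]
  refine (norm_sum_le _ _).trans ?_
  calc ∑ i, ‖w i • (a i - b i)‖ ≤ ∑ i, w i * d := by
        refine Finset.sum_le_sum fun i _ => ?_
        rw [norm_smul, Real.norm_eq_abs, abs_of_nonneg (hw i)]
        exact mul_le_mul_of_nonneg_left (h i) (hw i)
    _ = d := by rw [← Finset.sum_mul, hws, one_mul]

lemma avg_jensen {n : ℕ} (w : Fin n → ℝ) (hw : ∀ i, 0 ≤ w i) (hws : ∑ i, w i = 1)
    (a : Fin n → H) (z : H) :
    ‖(∑ i, w i • a i) - z‖ ^ 2 ≤ ∑ i, w i * ‖a i - z‖ ^ 2 := by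
  have h1 : ‖(∑ i, w i • a i) - z‖ ≤ ∑ i, w i * ‖a i - z‖ := by
    rw [avg_center w hws]
    refine (norm_sum_le _ _).trans (le_of_eq (Finset.sum_congr rfl fun i _ => ?_))
    rw [norm_smul, Real.norm_eq_abs, abs_of_nonneg (hw i)]
  have h2 : (∑ i, w i * ‖a i - z‖) ^ 2 ≤ (∑ i, w i) * ∑ i, w i * ‖a i - z‖ ^ 2 :=
    Finset.sum_sq_le_sum_mul_sum_of_sq_eq_mul _ (fun i _ => hw i)
      (fun i _ => mul_nonneg (hw i) (sq_nonneg _)) (fun i _ => by ring)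
  rw [hws, one_mul] at h2
  have h3 : ‖(∑ i, w i • a i) - z‖ ^ 2 ≤ (∑ i, w i * ‖a i - z‖) ^ 2 :=
    pow_le_pow_left₀ (norm_nonneg _) h1 2
  linarith

lemma infDist_map_le {C : Set H} (hC : C.Nonempty) {f : H → H} {u : H}
    (h : ∀ z ∈ C, dist (f u) z ≤ dist u z) : infDist (f u) C ≤ infDist u C := by
  refine le_of_forall_pos_le_add fun ε hε => ?_
  obtain ⟨z, hzC, hd⟩ := (infDist_lt_iff hC).1 (lt_add_of_pos_right (infDist u C) hε)
  exact (infDist_le_dist_of_mem hzC).trans ((h z hzC).trans hd.le)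

end Aux

set_option maxHeartbeats 2000000 in
lemma geo_block {H : Type*} [NormedAddCommGroup H] [InnerProductSpace ℝ H]
    {M : ℕ} [Nonempty (Fin M)]
    {Cset : Fin M → Set H} (hCcv : ∀ i, Convex ℝ (Cset i))
    (hCne' : (⋂ i, Cset i).Nonempty)
    {P : Fin M → H → H} (hP : ∀ i, IsMetricProj (Cset i) (P i))
    {N : ℕ → ℕ} {J : (k : ℕ) → Fin (N k) → List (Fin M)} {w : (k : ℕ) → Fin (N k) → ℝ}
    (hw : ∀ k n, w k n ∈ Set.Ioo (0 : ℝ) 1) (hws : ∀ k, ∑ n, w k n = 1)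
    {ω : ℝ} (hω : 0 < ω) (hwω : ∀ k n, ω ≤ w k n)
    {m : ℕ} (hm : ∀ k n, (J k n).length ≤ m) {s : ℕ}
    {T : ℕ → H → H} (hT : ∀ k y, T k y = ∑ n, w k n • stringProd P (J k n) y)
    (hTquasi : ∀ k (u : H) {z : H}, z ∈ (⋂ i, Cset i) → ‖T k u - z‖ ≤ ‖u - z‖)
    {κ : ℝ} (hκpos : 0 < κ)
    {B2 : ℝ} (hB2def : B2 = 2 ^ m / ω)
    {Γ : ℝ} (hΓdef : Γ = max (κ * ((s:ℝ) + 1) * Real.sqrt B2) 1)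
    {θ : ℝ} (hθdef : θ = 1 - 1 / (2 * Γ ^ 2))
    (k0 : ℕ) (hcov : ∀ j : Fin M, ∃ l, k0 ≤ l ∧ l < k0 + s ∧ ∃ n, j ∈ J l n)
    (v : ℕ → H) (hv : ∀ t, v (t+1) = T (k0 + t) (v t))
    (hregv : infDist (v 0) (⋂ i, Cset i) ≤ κ * ⨆ j, infDist (v 0) (Cset j)) :
    infDist (v s) (⋂ i, Cset i) ^ 2 ≤ θ * infDist (v 0) (⋂ i, Cset i) ^ 2 := by
  set C : Set H := ⋂ i, Cset i with hCdef
  have hB2pos : 0 < B2 := by rw [hB2def]; positivity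
  have hΓ1 : 1 ≤ Γ := hΓdef ▸ le_max_right _ _
  have hΓpos : 0 < Γ := by linarith
  set a0 : ℝ := infDist (v 0) C with ha0def
  have ha0nn : 0 ≤ a0 := infDist_nonneg
  refine le_of_forall_pos_le_add fun δ hδ => ?_
  set ε : ℝ := min 1 (δ / (2 * a0 + 1)) with hεdef
  have hεpos : 0 < ε := lt_min one_pos (div_pos hδ (by linarith))
  have hεle : ε ≤ 1 := min_le_left _ _
  have hεδ : ε * (2 * a0 + 1) ≤ δ := by
    have h := min_le_right (1:ℝ) (δ / (2 * a0 + 1))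
    have h2 : (0:ℝ) < 2 * a0 + 1 := by linarith
    calc ε * (2 * a0 + 1) ≤ (δ / (2 * a0 + 1)) * (2 * a0 + 1) :=
          mul_le_mul_of_nonneg_right h h2.le
      _ = δ := div_mul_cancel₀ _ h2.ne'
  obtain ⟨z, hzC, hdz⟩ := (infDist_lt_iff (hCdef ▸ hCne')).1 (lt_add_of_pos_right a0 hεpos)
  have hzdiff : ∀ t, ‖v (t+1) - z‖ ≤ ‖v t - z‖ := fun t => by
    rw [hv t]; exact hTquasi _ _ hzC
  have hmon : ∀ t t', t ≤ t' → ‖v t' - z‖ ≤ ‖v t - z‖ := fun t t' h =>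
    antitone_nat_of_succ_le (f := fun t => ‖v t - z‖) hzdiff h
  set D : ℝ := ‖v 0 - z‖ ^ 2 - ‖v s - z‖ ^ 2 with hDdef
  have hDnn : 0 ≤ D := by
    have h := hmon 0 s (Nat.zero_le s)
    have := norm_nonneg (v s - z)
    rw [hDdef]; nlinarith
  have hDt : ∀ t, t < s → ‖v t - z‖ ^ 2 - ‖v (t+1) - z‖ ^ 2 ≤ D := by
    intro t ht
    have h1 := hmon 0 t (Nat.zero_le t)
    have h2 := hmon (t+1) s ht
    have h3 := norm_nonneg (v t - z)
    have h4 := norm_nonneg (v s - z)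
    have h5 := norm_nonneg (v (t+1) - z)
    rw [hDdef]; nlinarith
  have hDtnn : ∀ t, 0 ≤ ‖v t - z‖ ^ 2 - ‖v (t+1) - z‖ ^ 2 := by
    intro t
    have h := hzdiff t
    have := norm_nonneg (v (t+1) - z)
    nlinarith
  have hdiffnn : ∀ t (n : Fin (N (k0+t))),
      0 ≤ ‖v t - z‖ ^ 2 - ‖stringProd P (J (k0+t) n) (v t) - z‖ ^ 2 := by
    intro t n
    have hq := stringProd_quasi hCcv hP (J (k0+t) n) (v t) hzC
    have := norm_nonneg (stringProd P (J (k0+t) n) (v t) - z)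
    nlinarith
  have claim1 : ∀ t (n : Fin (N (k0 + t))),
      ‖v t - z‖ ^ 2 - ‖stringProd P (J (k0+t) n) (v t) - z‖ ^ 2
        ≤ (‖v t - z‖ ^ 2 - ‖v (t+1) - z‖ ^ 2) / ω := by
    intro t n0
    have hjensen : ‖v (t+1) - z‖ ^ 2
        ≤ ∑ n, w (k0+t) n * ‖stringProd P (J (k0+t) n) (v t) - z‖ ^ 2 := by
      rw [hv t, hT]
      exact avg_jensen _ (fun n => (hw _ n).1.le) (hws _) _ z
    have hterm : ∀ n : Fin (N (k0+t)),
        0 ≤ w (k0+t) n * (‖v t - z‖^2 - ‖stringProd P (J (k0+t) n) (v t) - z‖^2) :=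
      fun n => mul_nonneg (hw _ n).1.le (hdiffnn t n)
    have hsumid : ∑ n, w (k0+t) n * (‖v t - z‖^2 - ‖stringProd P (J (k0+t) n) (v t) - z‖^2)
        = ‖v t - z‖^2 - ∑ n, w (k0+t) n * ‖stringProd P (J (k0+t) n) (v t) - z‖^2 := by
      simp only [mul_sub, Finset.sum_sub_distrib, ← Finset.sum_mul, hws, one_mul]
    have hsingle := Finset.single_le_sum (fun n _ => hterm n) (Finset.mem_univ n0)
    have hωn := hwω (k0+t) n0
    have hd := hdiffnn t n0
    rw [le_div_iff₀ hω]
    nlinarith [hsingle, hsumid, hjensen]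
  have hpowm : ∀ t (n : Fin (N (k0+t))), (2:ℝ) ^ (J (k0+t) n).length ≤ 2 ^ m :=
    fun t n => pow_le_pow_right₀ one_le_two (hm _ n)
  have claim2 : ∀ t, t < s → ∀ (n : Fin (N (k0+t))) (j : Fin M), j ∈ J (k0+t) n →
      infDist (v t) (Cset j) ^ 2 ≤ B2 * D := by
    intro t ht n j hj
    have h1 := stringProd_mem_est hCcv hP (J (k0+t) n) (v t) hzC hj
    have h2 := claim1 t n
    have h3 := hDt t ht
    have h4 := hdiffnn t n
    have h5 := hpowm t n
    have h6 := hDtnn t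
    have hωD : (‖v t - z‖ ^ 2 - ‖v (t+1) - z‖ ^ 2) / ω ≤ D / ω :=
      div_le_div_of_nonneg_right h3 hω.le
    calc infDist (v t) (Cset j) ^ 2
        ≤ (2:ℝ) ^ (J (k0+t) n).length
          * (‖v t - z‖^2 - ‖stringProd P (J (k0+t) n) (v t) - z‖^2) := h1
      _ ≤ (2:ℝ) ^ m * (‖v t - z‖^2 - ‖stringProd P (J (k0+t) n) (v t) - z‖^2) :=
          mul_le_mul_of_nonneg_right h5 h4
      _ ≤ (2:ℝ) ^ m * ((‖v t - z‖ ^ 2 - ‖v (t+1) - z‖ ^ 2) / ω) :=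
          mul_le_mul_of_nonneg_left h2 (by positivity)
      _ ≤ (2:ℝ) ^ m * (D / ω) := mul_le_mul_of_nonneg_left hωD (by positivity)
      _ = B2 * D := by rw [hB2def]; ring
  have claim3 : ∀ t, t < s → ‖v t - v (t+1)‖ ≤ Real.sqrt (B2 * D) := by
    intro t ht
    have hstep : ∀ n : Fin (N (k0+t)),
        ‖v t - stringProd P (J (k0+t) n) (v t)‖ ≤ Real.sqrt (B2 * D) := by
      intro n
      have h1 := stringProd_move hCcv hP (J (k0+t) n) (v t) hzC
      have h2 := claim1 t n
      have h3 := hDt t ht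
      have h4 := hdiffnn t n
      have h5 := hpowm t n
      have hωD : (‖v t - z‖ ^ 2 - ‖v (t+1) - z‖ ^ 2) / ω ≤ D / ω :=
        div_le_div_of_nonneg_right h3 hω.le
      have hsq : ‖v t - stringProd P (J (k0+t) n) (v t)‖ ^ 2 ≤ B2 * D := by
        calc ‖v t - stringProd P (J (k0+t) n) (v t)‖ ^ 2
            ≤ (2:ℝ) ^ (J (k0+t) n).length
              * (‖v t - z‖^2 - ‖stringProd P (J (k0+t) n) (v t) - z‖^2) := h1
          _ ≤ (2:ℝ) ^ m * (‖v t - z‖^2 - ‖stringProd P (J (k0+t) n) (v t) - z‖^2) :=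
              mul_le_mul_of_nonneg_right h5 h4
          _ ≤ (2:ℝ) ^ m * ((‖v t - z‖ ^ 2 - ‖v (t+1) - z‖ ^ 2) / ω) :=
              mul_le_mul_of_nonneg_left h2 (by positivity)
          _ ≤ (2:ℝ) ^ m * (D / ω) := mul_le_mul_of_nonneg_left hωD (by positivity)
          _ = B2 * D := by rw [hB2def]; ring
      exact (Real.le_sqrt (norm_nonneg _) (mul_nonneg hB2pos.le hDnn)).2 hsq
    have hvt : v t = ∑ n, w (k0+t) n • v t := by
      rw [← Finset.sum_smul, hws, one_smul]
    calc ‖v t - v (t+1)‖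
        = ‖(∑ n, w (k0+t) n • v t)
            - (∑ n, w (k0+t) n • stringProd P (J (k0+t) n) (v t))‖ := by
          rw [← hvt, hv t, hT]
      _ ≤ Real.sqrt (B2 * D) :=
          avg_dist_le _ (fun n => (hw _ n).1.le) (hws _) _ _ _ hstep
  have chain : ∀ j : Fin M, infDist (v 0) (Cset j) ≤ ((s:ℝ) + 1) * Real.sqrt (B2 * D) := by
    intro j
    obtain ⟨l, hl1, hl2, n, hjn⟩ := hcov j
    obtain ⟨t, rfl⟩ : ∃ t, l = k0 + t := ⟨l - k0, by omega⟩
    have hlt : t < s := by omega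
    have h5 := claim2 t hlt n j hjn
    have h5' : infDist (v t) (Cset j) ≤ Real.sqrt (B2 * D) :=
      (Real.le_sqrt infDist_nonneg (mul_nonneg hB2pos.le hDnn)).2 h5
    have h1 : infDist (v 0) (Cset j) ≤ infDist (v t) (Cset j) + dist (v 0) (v t) :=
      infDist_le_infDist_add_dist
    have h2 : dist (v 0) (v t) ≤ ∑ r ∈ Finset.range t, dist (v r) (v (r+1)) :=
      dist_le_range_sum_dist v t
    have h3 : ∑ r ∈ Finset.range t, dist (v r) (v (r+1)) ≤ (t:ℝ) * Real.sqrt (B2 * D) := by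
      calc ∑ r ∈ Finset.range t, dist (v r) (v (r+1))
          ≤ ∑ _r ∈ Finset.range t, Real.sqrt (B2 * D) :=
            Finset.sum_le_sum fun r hr => by
              rw [dist_eq_norm]
              exact claim3 r ((Finset.mem_range.1 hr).trans hlt)
        _ = (t:ℝ) * Real.sqrt (B2 * D) := by
            rw [Finset.sum_const, Finset.card_range, nsmul_eq_mul]
    have hts : (t:ℝ) ≤ (s:ℝ) := by exact_mod_cast hlt.le
    have hsqnn := Real.sqrt_nonneg (B2 * D)
    nlinarith
  have hsup2 : infDist (v 0) C ≤ κ * (((s:ℝ) + 1) * Real.sqrt (B2 * D)) :=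
    hregv.trans (mul_le_mul_of_nonneg_left (ciSup_le chain) hκpos.le)
  have hsqrtD : Real.sqrt (B2 * D) = Real.sqrt B2 * Real.sqrt D := Real.sqrt_mul hB2pos.le _
  have ha0G : a0 ≤ Γ * Real.sqrt D := by
    calc a0 ≤ κ * (((s:ℝ) + 1) * (Real.sqrt B2 * Real.sqrt D)) := by
          rw [← hsqrtD]; exact hsup2
      _ = (κ * ((s:ℝ) + 1) * Real.sqrt B2) * Real.sqrt D := by ring
      _ ≤ Γ * Real.sqrt D :=
          mul_le_mul_of_nonneg_right (hΓdef ▸ le_max_left _ _) (Real.sqrt_nonneg _)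
  have ha0sq : a0 ^ 2 ≤ Γ ^ 2 * D := by
    have h := mul_self_le_mul_self ha0nn ha0G
    have hsq : (Γ * Real.sqrt D) * (Γ * Real.sqrt D) = Γ ^ 2 * D := by
      rw [show (Γ * Real.sqrt D) * (Γ * Real.sqrt D) = Γ^2 * (Real.sqrt D * Real.sqrt D) by ring,
        Real.mul_self_sqrt hDnn]
    nlinarith
  have hvs : infDist (v s) C ≤ ‖v s - z‖ := by
    rw [← dist_eq_norm]; exact infDist_le_dist_of_mem hzC
  have hvz0 : ‖v 0 - z‖ < a0 + ε := by rw [← dist_eq_norm]; exact hdz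
  have h6 : infDist (v s) C ^ 2 ≤ ‖v s - z‖ ^ 2 := by
    have h0 : (0:ℝ) ≤ infDist (v s) C := infDist_nonneg
    nlinarith
  have h8 : ‖v 0 - z‖ ^ 2 ≤ (a0 + ε) ^ 2 := by
    have := norm_nonneg (v 0 - z)
    nlinarith
  have hεδ' : 2 * a0 * ε + ε ^ 2 ≤ δ := by nlinarith
  have h2G : (0:ℝ) < 2 * Γ ^ 2 := by positivity
  have hθexp : θ * (2 * Γ ^ 2) = 2 * Γ ^ 2 - 1 := by
    rw [hθdef]; field_simp
  refine le_of_mul_le_mul_right ?_ h2G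
  have hDexp : ‖v s - z‖ ^ 2 = ‖v 0 - z‖ ^ 2 - D := by rw [hDdef]; ring
  have hstep1 : infDist (v s) C ^ 2 * (2 * Γ ^ 2)
      ≤ ((a0 + ε) ^ 2 - D) * (2 * Γ ^ 2) := by nlinarith
  refine hstep1.trans ?_
  nlinarith [mul_nonneg (sub_nonneg.2 hεδ') h2G.le, sq_nonneg a0]

set_option maxHeartbeats 1000000 in
theorem stmt18 {H : Type*} [NormedAddCommGroup H] [InnerProductSpace ℝ H] [CompleteSpace H]
    {M : ℕ} [NeZero M]
    (Cset : Fin M → Set H) (hCcl : ∀ i, IsClosed (Cset i)) (hCcv : ∀ i, Convex ℝ (Cset i))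
    (hCne : (⋂ i, Cset i).Nonempty)
    (P : Fin M → H → H) (hP : ∀ i, IsMetricProj (Cset i) (P i))
    (N : ℕ → ℕ) (J : (k : ℕ) → Fin (N k) → List (Fin M)) (w : (k : ℕ) → Fin (N k) → ℝ)
    (hw : ∀ k n, w k n ∈ Set.Ioo (0 : ℝ) 1) (hws : ∀ k, ∑ n, w k n = 1)
    (ω : ℝ) (hω : 0 < ω) (hwω : ∀ k n, ω ≤ w k n)
    (m : ℕ) (hm : ∀ k n, (J k n).length ≤ m)
    (s : ℕ) (hs : 1 ≤ s)
    (hcover : ∀ k, ∀ i : Fin M, ∃ l, k ≤ l ∧ l < k + s ∧ ∃ n, i ∈ J l n)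
    (T : ℕ → H → H) (hT : ∀ k y, T k y = ∑ n, w k n • stringProd P (J k n) y)
    (e : ℕ → ℝ) (he : ∀ k, 0 ≤ e k) (hesum : Summable e)
    (x : ℕ → H) (hx : ∀ k, ‖x (k + 1) - T k (x k)‖ ≤ e k)
    (hblr : ∀ S : Set H, Bornology.IsBounded S → ∃ κS > (0 : ℝ),
      ∀ y ∈ S, infDist y (⋂ i, Cset i) ≤ κS * ⨆ j, infDist y (Cset j)) :
    ∃ κ > (0 : ℝ), ∃ c > (0 : ℝ), ∃ q : ℝ, 0 < q ∧ q < 1 ∧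
      ∃ xlim ∈ ⋂ i, Cset i, ∀ i k : ℕ, i ≤ k →
        1 / (2 * κ) * ‖x (k + 1) - xlim‖ - 2 * ∑' j, e (i + j) ≤
            (⨆ j, infDist (x (k + 1)) (Cset j)) ∧
          (⨆ j, infDist (x (k + 1)) (Cset j)) ≤ c * q ^ (k - i) + 2 * ∑' j, e (i + j) := by
  classical
  have hMpos : 0 < M := Nat.pos_of_ne_zero (NeZero.ne M)
  have hFinNe : Nonempty (Fin M) := ⟨⟨0, hMpos⟩⟩
  set C : Set H := ⋂ i, Cset i with hCdef
  obtain ⟨z0, hz0⟩ := hCne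
  have hCne' : C.Nonempty := ⟨z0, hz0⟩
  have hCclosed : IsClosed C := isClosed_iInter hCcl
  -- error tails
  set E : ℕ → ℝ := fun i => ∑' j, e (i + j) with hEdef
  have hesum' : ∀ i, Summable fun j => e (i + j) := fun i =>
    ((summable_nat_add_iff i).2 hesum).congr fun j => by rw [add_comm]
  have hEnn : ∀ i, 0 ≤ E i := fun i => tsum_nonneg fun j => he _
  have hEsplit : ∀ i d, E i = (∑ t ∈ Finset.range d, e (i + t)) + E (i + d) := by
    intro i d
    have h1 := Summable.sum_add_tsum_nat_add (f := fun t => e (i + t)) d (hesum' i)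
    have h2 : E (i + d) = ∑' t, e (i + (t + d)) :=
      tsum_congr fun t => congrArg e (by omega)
    rw [h2]
    exact h1.symm
  have hEmono : ∀ i j, i ≤ j → E j ≤ E i := by
    intro i j hij
    have h1 := hEsplit i (j - i)
    have hsum : (0:ℝ) ≤ ∑ t ∈ Finset.range (j - i), e (i + t) :=
      Finset.sum_nonneg fun t _ => he _
    rw [show i + (j - i) = j by omega] at h1
    linarith
  have hpartial : ∀ i d, (∑ t ∈ Finset.range d, e (i + t)) ≤ E i := by
    intro i d
    have := hEsplit i d
    linarith [hEnn (i + d)]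
  have hEone : ∀ k, E k = e k + E (k + 1) := by
    intro k
    have := hEsplit k 1
    simpa using this
  -- T facts
  have hTfix : ∀ k {z : H}, z ∈ C → T k z = z := by
    intro k z hz
    rw [hT]
    have hfix : ∀ n : Fin (N k), stringProd P (J k n) z = z := fun n =>
      stringProd_fixes hP _ hz
    simp only [hfix]
    rw [← Finset.sum_smul, hws, one_smul]
  have hTnon : ∀ k (u v : H), ‖T k u - T k v‖ ≤ ‖u - v‖ := by
    intro k u v
    rw [hT, hT]
    exact avg_dist_le _ (fun n => (hw k n).1.le) (hws k) _ _ _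
      (fun n => stringProd_nonexp hCcv hP _ u v)
  have hTquasi : ∀ k (u : H) {z : H}, z ∈ C → ‖T k u - z‖ ≤ ‖u - z‖ := by
    intro k u z hz
    have h := hTnon k u z
    rwa [hTfix k hz] at h
  -- boundedness
  set A : ℝ := ‖x 0 - z0‖ + E 0 with hAdef
  have hxA : ∀ k, ‖x k - z0‖ + E k ≤ A := by
    intro k
    induction k with
    | zero => simp [hAdef]
    | succ k ih =>
      have h1 : ‖x (k+1) - z0‖ ≤ e k + ‖x k - z0‖ := by
        have h2 := hx k
        have h3 := hTquasi k (x k) hz0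
        calc ‖x (k+1) - z0‖
            = ‖(x (k+1) - T k (x k)) + (T k (x k) - z0)‖ := by rw [sub_add_sub_cancel]
          _ ≤ ‖x (k+1) - T k (x k)‖ + ‖T k (x k) - z0‖ := norm_add_le _ _
          _ ≤ e k + ‖x k - z0‖ := add_le_add h2 h3
      have h4 := hEone k
      linarith
  have hAnn : 0 ≤ A := by
    rw [hAdef]; linarith [norm_nonneg (x 0 - z0), hEnn 0]
  have hxball : ∀ k, ‖x k - z0‖ ≤ A := fun k => by linarith [hxA k, hEnn k]
  -- regularity constant
  obtain ⟨κ0, hκ0pos, hκ0⟩ := hblr (closedBall z0 A) isBounded_closedBall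
  set κ : ℝ := max κ0 1 with hκdef
  have hκ1 : 1 ≤ κ := le_max_right _ _
  have hκpos : 0 < κ := lt_of_lt_of_le one_pos hκ1
  have hsupnn : ∀ y : H, 0 ≤ ⨆ j, infDist y (Cset j) := by
    intro y
    have h0 : infDist y (Cset ⟨0, hMpos⟩) ≤ ⨆ j, infDist y (Cset j) :=
      le_ciSup (f := fun j => infDist y (Cset j))
        (Set.Finite.bddAbove (Set.finite_range _)) ⟨0, hMpos⟩
    exact le_trans infDist_nonneg h0
  have hreg : ∀ y : H, ‖y - z0‖ ≤ A → infDist y C ≤ κ * ⨆ j, infDist y (Cset j) := by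
    intro y hy
    have hyS : y ∈ closedBall z0 A := by rwa [mem_closedBall_iff_norm]
    exact (hκ0 y hyS).trans (mul_le_mul_of_nonneg_right (le_max_left _ _) (hsupnn y))
  have hsup_le_inf : ∀ y : H, (⨆ j, infDist y (Cset j)) ≤ infDist y C := fun y =>
    ciSup_le fun j => infDist_le_infDist_of_subset (Set.iInter_subset _ j) hCne'
  -- constants
  set B2 : ℝ := 2 ^ m / ω with hB2def
  have hB2pos : 0 < B2 := by rw [hB2def]; positivity
  set Γ : ℝ := max (κ * ((s:ℝ) + 1) * Real.sqrt B2) 1 with hΓdef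
  have hΓ1 : 1 ≤ Γ := le_max_right _ _
  have hΓpos : 0 < Γ := by linarith
  have hΓsq : 1 ≤ Γ ^ 2 := by nlinarith
  set θ : ℝ := 1 - 1 / (2 * Γ ^ 2) with hθdef
  have hhalf : 1 / (2 * Γ ^ 2) ≤ 1 / 2 := by
    rw [div_le_div_iff₀ (by positivity) (by norm_num)]
    nlinarith
  have hθpos : 0 < θ := by
    rw [hθdef]; linarith
  have hθlt1 : θ < 1 := by
    have : 0 < 1 / (2 * Γ ^ 2) := by positivity
    rw [hθdef]; linarith
  -- exact trajectories
  set y : ℕ → ℕ → H := fun i n => Nat.rec (x i) (fun p v => T (i + p) v) n with hydef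
  have hy0 : ∀ i, y i 0 = x i := fun i => rfl
  have hyS : ∀ i n, y i (n + 1) = T (i + n) (y i n) := fun i n => rfl
  have hyball : ∀ i n, ‖y i n - z0‖ ≤ A := by
    intro i n
    induction n with
    | zero => rw [hy0]; exact hxball i
    | succ n ih =>
      rw [hyS]
      exact le_trans (hTquasi _ _ hz0) ih
  have hcomp : ∀ i n, ‖x (i + n) - y i n‖ ≤ ∑ t ∈ Finset.range n, e (i + t) := by
    intro i n
    induction n with
    | zero => simp [hy0]
    | succ n ih =>
      rw [hyS]
      have h1 := hx (i + n)
      have h2 := hTnon (i + n) (x (i + n)) (y i n)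
      have heq : x (i + (n+1)) - T (i+n) (y i n)
          = (x (i + n + 1) - T (i+n) (x (i+n))) + (T (i+n) (x (i+n)) - T (i+n) (y i n)) := by
        rw [show i + (n+1) = i + n + 1 from rfl]; abel
      rw [heq]
      calc ‖(x (i + n + 1) - T (i+n) (x (i+n))) + (T (i+n) (x (i+n)) - T (i+n) (y i n))‖
          ≤ ‖x (i + n + 1) - T (i+n) (x (i+n))‖ + ‖T (i+n) (x (i+n)) - T (i+n) (y i n)‖ :=
            norm_add_le _ _
        _ ≤ e (i + n) + ∑ t ∈ Finset.range n, e (i + t) :=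
            add_le_add h1 (h2.trans ih)
        _ = ∑ t ∈ Finset.range (n+1), e (i + t) := by
            rw [Finset.sum_range_succ]; ring
  -- geometric block estimate
  have hGEO : ∀ k0 (v : ℕ → H), (∀ t, v (t+1) = T (k0 + t) (v t)) → ‖v 0 - z0‖ ≤ A →
      infDist (v s) C ^ 2 ≤ θ * infDist (v 0) C ^ 2 := by
    intro k0 v hv hball
    exact geo_block hCcv hCne' hP hw hws hω hwω hm hT (fun k u z hz => hTquasi k u hz)
      hκpos hB2def hΓdef hθdef k0 (hcover k0) v hv (hreg (v 0) hball)
  -- iteration of blocks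
  have hxinf : ∀ i, infDist (x i) C ≤ A := fun i =>
    (infDist_le_dist_of_mem hz0).trans (by rw [dist_eq_norm]; exact hxball i)
  have hblock : ∀ i r, infDist (y i (r*s)) C ^ 2 ≤ θ ^ r * infDist (x i) C ^ 2 := by
    intro i r
    induction r with
    | zero => simp [hy0, Nat.zero_mul]
    | succ r ih =>
      have happ := hGEO (i + r*s) (fun t => y i (r*s + t))
        (fun t => by
          show y i ((r*s+t)+1) = T (i + r*s + t) (y i (r*s+t))
          rw [hyS, add_assoc])
        (hyball i (r*s + 0))
      calc infDist (y i ((r+1)*s)) C ^ 2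
          = infDist (y i (r*s + s)) C ^ 2 := by rw [show (r+1)*s = r*s + s by ring]
        _ ≤ θ * infDist (y i (r*s + 0)) C ^ 2 := happ
        _ = θ * infDist (y i (r*s)) C ^ 2 := by rw [Nat.add_zero]
        _ ≤ θ * (θ^r * infDist (x i) C ^ 2) := mul_le_mul_of_nonneg_left ih hθpos.le
        _ = θ^(r+1) * infDist (x i) C ^ 2 := by ring
  have hmono2 : ∀ i n n', n ≤ n' → infDist (y i n') C ≤ infDist (y i n) C := by
    intro i
    have h1 : ∀ n, infDist (y i (n+1)) C ≤ infDist (y i n) C := by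
      intro n
      rw [hyS]
      refine infDist_map_le hCne' (f := T (i+n)) fun z hz => ?_
      rw [dist_eq_norm, dist_eq_norm]
      exact hTquasi _ _ hz
    exact fun n n' h => antitone_nat_of_succ_le (f := fun n => infDist (y i n) C) h1 h
  -- the rate constants
  have hspos : 0 < s := hs
  set q : ℝ := θ ^ ((1:ℝ) / (2*(s:ℝ))) with hqdef
  have hqpos : 0 < q := Real.rpow_pos_of_pos hθpos _
  have hqlt1 : q < 1 := Real.rpow_lt_one hθpos.le hθlt1 (by positivity)
  have hq2s : q ^ (2*s) = θ := by
    rw [hqdef, ← Real.rpow_natCast (θ ^ ((1:ℝ)/(2*(s:ℝ)))) (2*s), ← Real.rpow_mul hθpos.le]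
    rw [show (1:ℝ)/(2*(s:ℝ)) * ((2*s : ℕ):ℝ) = 1 by
      push_cast
      field_simp]
    exact Real.rpow_one θ
  have hqs : (0:ℝ) < q ^ s := by positivity
  set c : ℝ := A / q ^ s + 1 with hcdef
  have hcpos : 0 < c := by
    have : 0 ≤ A / q^s := div_nonneg hAnn hqs.le
    rw [hcdef]; linarith
  have hdecay : ∀ i n, infDist (y i n) C ≤ q ^ (s * (n / s)) * A := by
    intro i n
    have h1 : infDist (y i n) C ≤ infDist (y i (n/s*s)) C :=
      hmono2 i (n/s*s) n (Nat.div_mul_le_self n s)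
    have h2 := hblock i (n/s)
    have h3 := hxinf i
    have h4 : infDist (x i) C ^ 2 ≤ A^2 := by
      nlinarith [infDist_nonneg (x := x i) (s := C)]
    have hθq : θ ^ (n/s) = (q^(s*(n/s)))^2 := by
      rw [← hq2s, ← pow_mul, ← pow_mul]
      congr 1
      ring
    have h5 : infDist (y i (n/s*s)) C ^ 2 ≤ (q^(s*(n/s)) * A)^2 := by
      calc infDist (y i (n/s*s)) C ^ 2 ≤ θ^(n/s) * infDist (x i) C ^ 2 := h2
        _ ≤ θ^(n/s) * A^2 := mul_le_mul_of_nonneg_left h4 (pow_nonneg hθpos.le _)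
        _ = (q^(s*(n/s)) * A)^2 := by rw [hθq]; ring
    have hq6 : 0 ≤ q^(s*(n/s)) * A := mul_nonneg (pow_nonneg hqpos.le _) hAnn
    have h6 : infDist (y i (n/s*s)) C ≤ q^(s*(n/s)) * A := by
      nlinarith [infDist_nonneg (x := y i (n/s*s)) (s := C)]
    exact h1.trans h6
  have haxk : ∀ i k, i ≤ k + 1 → infDist (x (k+1)) C ≤ q^(s*((k+1-i)/s)) * A + E i := by
    intro i k hik
    have hn : i + (k+1-i) = k+1 := by omega
    have h1 : infDist (x (k+1)) C
        ≤ infDist (y i (k+1-i)) C + dist (x (k+1)) (y i (k+1-i)) := infDist_le_infDist_add_dist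
    have h2 : dist (x (k+1)) (y i (k+1-i)) ≤ E i := by
      rw [dist_eq_norm]
      have h := hcomp i (k+1-i)
      rw [hn] at h
      exact h.trans (hpartial i _)
    linarith [hdecay i (k+1-i)]
  have hqsA : ∀ i k, i ≤ k → q^(s*((k+1-i)/s)) * A ≤ c * q^(k-i) := by
    intro i k hik
    have hdm := Nat.div_add_mod (k+1-i) s
    have hms : (k+1-i) % s < s := Nat.mod_lt _ hspos
    have hexp2 : k - i ≤ s*((k+1-i)/s) + s := by omega
    have h3 : q^(s*((k+1-i)/s)+s) ≤ q^(k-i) :=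
      pow_le_pow_of_le_one hqpos.le hqlt1.le hexp2
    rw [pow_add] at h3
    have h4 : q^(s*((k+1-i)/s)) * A ≤ (A / q^s) * q^(k-i) := by
      rw [div_mul_eq_mul_div, le_div_iff₀ hqs]
      calc q^(s*((k+1-i)/s)) * A * q^s = (q^(s*((k+1-i)/s)) * q^s) * A := by ring
        _ ≤ q^(k-i) * A := mul_le_mul_of_nonneg_right h3 hAnn
        _ = A * q^(k-i) := mul_comm _ _
    refine h4.trans (mul_le_mul_of_nonneg_right ?_ (pow_nonneg hqpos.le _))
    rw [hcdef]; linarith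
  have hupper : ∀ i k, i ≤ k → infDist (x (k+1)) C ≤ c * q^(k-i) + E i := fun i k hik =>
    (haxk i k (by omega)).trans (by linarith [hqsA i k hik])
  -- convergence of the error tails
  have hE0eq : ∀ i, E i = E 0 - ∑ t ∈ Finset.range i, e t := by
    intro i
    have h := hEsplit 0 i
    simp only [zero_add] at h
    linarith
  have hEtend : Tendsto E atTop (𝓝 0) := by
    have hE00 : E 0 = ∑' j, e j := tsum_congr fun j => by rw [zero_add]
    have h1 : Tendsto (fun i => ∑ t ∈ Finset.range i, e t) atTop (𝓝 (E 0)) := by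
      rw [hE00]
      exact hesum.hasSum.tendsto_sum_nat
    have h2 : Tendsto (fun i => E 0 - ∑ t ∈ Finset.range i, e t) atTop (𝓝 (E 0 - E 0)) :=
      tendsto_const_nhds.sub h1
    rw [sub_self] at h2
    exact h2.congr fun i => (hE0eq i).symm
  have hatend : Tendsto (fun k => infDist (x k) C) atTop (𝓝 0) := by
    clear_value A q c E
    rw [Metric.tendsto_atTop]
    intro ε hε
    obtain ⟨i0, hi0⟩ := (Metric.tendsto_atTop.1 hEtend) (ε/4) (by linarith)
    have hEi0 : E i0 < ε/4 := by
      have h := hi0 i0 le_rfl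
      rw [Real.dist_eq, sub_zero] at h
      exact (abs_lt.1 h).2
    obtain ⟨K, hK⟩ := (Metric.tendsto_atTop.1
      (tendsto_pow_atTop_nhds_zero_of_lt_one hqpos.le hqlt1)) (ε/(2*c))
      (div_pos (by linarith) (by linarith))
    refine ⟨i0 + K + 1, fun k hk => ?_⟩
    obtain ⟨k', rfl⟩ : ∃ k', k = k' + 1 := ⟨k - 1, by omega⟩
    have hik : i0 ≤ k' := by omega
    have h1 := hupper i0 k' hik
    have h2 : q^(k' - i0) < ε/(2*c) := by
      have h := hK (k' - i0) (by omega)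
      rw [Real.dist_eq, sub_zero] at h
      exact (abs_lt.1 h).2
    rw [Real.dist_eq, sub_zero, abs_of_nonneg infDist_nonneg]
    have h3 : c * q^(k'-i0) < c * (ε/(2*c)) := by
      exact mul_lt_mul_of_pos_left h2 hcpos
    have hcc : c * (ε/(2*c)) = ε/2 := by
      field_simp
    linarith [h1, h3, hcc, hEi0, hε]
  -- quasi-Fejér and Cauchy property
  have hquasi2 : ∀ k (z:H), z ∈ C → ∀ p, ‖x (k+p) - z‖ + E (k+p) ≤ ‖x k - z‖ + E k := by
    intro k z hz p
    induction p with
    | zero => simp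
    | succ p ih =>
      have h1 := hx (k+p)
      have h2 := hTquasi (k+p) (x (k+p)) hz
      have h3 := hEone (k+p)
      have h4 : ‖x (k+p+1) - z‖ ≤ e (k+p) + ‖x (k+p) - z‖ := by
        calc ‖x (k+p+1) - z‖
            = ‖(x (k+p+1) - T (k+p) (x (k+p))) + (T (k+p) (x (k+p)) - z)‖ := by
              rw [sub_add_sub_cancel]
          _ ≤ ‖x (k+p+1) - T (k+p) (x (k+p))‖ + ‖T (k+p) (x (k+p)) - z‖ := norm_add_le _ _
          _ ≤ e (k+p) + ‖x (k+p) - z‖ := add_le_add h1 h2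
      have heq : k + (p+1) = (k+p)+1 := rfl
      rw [heq]
      linarith
  have hdistC : ∀ k p, dist (x (k+p)) (x k) ≤ 2 * infDist (x k) C + E k := by
    intro k p
    refine le_of_forall_pos_le_add fun δ hδ => ?_
    obtain ⟨z, hzC2, hdz⟩ := (infDist_lt_iff hCne').1
      (lt_add_of_pos_right (infDist (x k) C) (half_pos hδ))
    have h1 := hquasi2 k z hzC2 p
    have h2 := hEnn (k+p)
    have h3 : dist (x (k+p)) (x k) ≤ dist (x (k+p)) z + dist z (x k) := dist_triangle _ _ _
    have h4 : dist (x (k+p)) z = ‖x (k+p) - z‖ := dist_eq_norm _ _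
    have h5 : dist z (x k) = ‖x k - z‖ := by rw [dist_comm, dist_eq_norm]
    have h6 : ‖x k - z‖ < infDist (x k) C + δ/2 := by rw [← dist_eq_norm]; exact hdz
    rw [h4, h5] at h3
    linarith
  have hb : ∀ N' n p, N' ≤ n → N' ≤ p →
      dist (x n) (x p) ≤ 2*(2*infDist (x N') C + E N') := by
    intro N' n p hn hp
    have h1 := hdistC N' (n - N')
    have h2 := hdistC N' (p - N')
    rw [show N' + (n - N') = n by omega] at h1
    rw [show N' + (p - N') = p by omega] at h2
    calc dist (x n) (x p) ≤ dist (x n) (x N') + dist (x p) (x N') := dist_triangle_right _ _ _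
      _ ≤ 2*(2*infDist (x N') C + E N') := by linarith
  have hbtend : Tendsto (fun k => 2*(2*infDist (x k) C + E k)) atTop (𝓝 0) := by
    have h := ((hatend.const_mul 2).add hEtend).const_mul 2
    simpa using h
  have hcauchy : CauchySeq x :=
    cauchySeq_of_le_tendsto_0 _ (fun n p N' hn hp => hb N' n p hn hp) hbtend
  obtain ⟨xlim, hxlim⟩ := cauchySeq_tendsto_of_complete hcauchy
  have hxlimC : xlim ∈ C := by
    rw [hCclosed.mem_iff_infDist_zero hCne']
    have hle : ∀ n:ℕ, infDist xlim C ≤ infDist (x n) C + dist xlim (x n) := fun n =>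
      infDist_le_infDist_add_dist
    have hdtend : Tendsto (fun n => dist xlim (x n)) atTop (𝓝 0) := by
      have h := hxlim.dist (tendsto_const_nhds : Tendsto (fun _ : ℕ => xlim) atTop _)
      simpa [dist_comm] using h
    have hsum := hatend.add hdtend
    rw [add_zero] at hsum
    have hle0 : infDist xlim C ≤ 0 := ge_of_tendsto hsum (Eventually.of_forall hle)
    exact le_antisymm hle0 infDist_nonneg
  have hlimdist : ∀ k, dist xlim (x (k+1)) ≤ 2*infDist (x (k+1)) C + E (k+1) := by
    intro k
    have hshift : Tendsto (fun p => (k+1)+p) atTop atTop :=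
      (Filter.tendsto_add_atTop_nat (k+1)).congr fun p => add_comm p (k+1)
    have hcomp2 : Tendsto (fun p => x ((k+1)+p)) atTop (𝓝 xlim) := hxlim.comp hshift
    have htt : Tendsto (fun p => dist (x ((k+1)+p)) (x (k+1))) atTop
        (𝓝 (dist xlim (x (k+1)))) := hcomp2.dist tendsto_const_nhds
    exact le_of_tendsto htt (Eventually.of_forall fun p => hdistC (k+1) p)
  -- conclusion
  refine ⟨κ, hκpos, c, hcpos, q, hqpos, hqlt1, xlim, hxlimC, fun i k hik => ?_⟩
  have hEi : (∑' j, e (i + j)) = E i := rfl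
  constructor
  · have h1 := hlimdist k
    have h2 : infDist (x (k+1)) C ≤ κ * (⨆ j, infDist (x (k+1)) (Cset j)) :=
      hreg _ (hxball (k+1))
    have h3 : E (k+1) ≤ E i := hEmono i (k+1) (by omega)
    have h4 : ‖x (k+1) - xlim‖ = dist xlim (x (k+1)) := by rw [dist_comm, dist_eq_norm]
    have hbound : ‖x (k+1) - xlim‖ ≤ 2*κ*(⨆ j, infDist (x (k+1)) (Cset j)) + E i := by
      rw [h4]; linarith
    have hpos2κ : (0:ℝ) < 2*κ := by linarith
    have h5 : 1/(2*κ) * ‖x (k+1) - xlim‖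
        ≤ (⨆ j, infDist (x (k+1)) (Cset j)) + E i / (2*κ) := by
      have hmul := mul_le_mul_of_nonneg_left hbound
        (le_of_lt (by positivity : (0:ℝ) < 1/(2*κ)))
      calc 1/(2*κ) * ‖x (k+1) - xlim‖
          ≤ 1/(2*κ) * (2*κ*(⨆ j, infDist (x (k+1)) (Cset j)) + E i) := hmul
        _ = (⨆ j, infDist (x (k+1)) (Cset j)) + E i / (2*κ) := by field_simp
    have h6 : E i / (2*κ) ≤ E i := by
      rw [div_le_iff₀ hpos2κ]
      nlinarith [hEnn i]
    rw [hEi]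
    linarith [hEnn i]
  · have h1 := hsup_le_inf (x (k+1))
    have h2 := hupper i k hik
    rw [hEi]
    linarith [hEnn i]
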